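/- Generic non-degeneracy under random perturbation (Proposition 6): Fix a finite world set Ω, agent sets A and B with |A| = |B| = n, arbitrary values v_x(y | ω) ∈ ℝ, and ε > 0. Let (ε_{x,y,ω}) be a family of independent random variables, each uniformly distributed on (−ε, ε), indexed by agents x, agents y on the other side, and worlds ω, and set ṽ_x(y | ω) := v_x(y | ω) + ε_{x,y,ω}. Then with probability 1 the instance with values ṽ is non-degenerate. -/

import Mathlib

open Finset MeasureTheory

namespace MP

/-- `r` is a strict total order (written `r x y ↔ x ≺ y`). -/
def StrictOrd {X : Type*} (r : X → X → Bool) : Prop :=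
  (∀ x, r x x = false) ∧
  (∀ x y z, r x y = true → r y z = true → r x z = true) ∧
  (∀ x y, x ≠ y → (r x y = true ∨ r y x = true))

/-- A (raw) preference profile: `Bool`-valued relations for both sides. -/
abbrev Pref (A B : Type*) := (A → B → B → Bool) × (B → A → A → Bool)

/-- A strict preference profile: each agent has a strict total order. -/
def StrictProfile {A B : Type*} (L : Pref A B) : Prop :=
  (∀ a, StrictOrd (L.1 a)) ∧ (∀ b, StrictOrd (L.2 b))

/-- `y'` is the immediate successor of `y` in the strict order `r`. -/
def Covers {X : Type*} (r : X → X → Bool) (y y' : X) : Prop :=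
  r y y' = true ∧ ∀ z, ¬(r y z = true ∧ r z y' = true)

/-- The set `V_≺` of consecutive-difference vectors of a strict profile `L`:
all vectors `(v_x(y_ℓ | ω) − v_x(y_{ℓ+1} | ω))_ω` where `y_{ℓ+1}` is the
immediate `≺_x`-successor of `y_ℓ`. -/
def Vset {Ω A B : Type*} (vA : A → B → Ω → ℝ) (vB : B → A → Ω → ℝ)
    (L : Pref A B) : Set (Ω → ℝ) :=
  {w | (∃ a y y', Covers (L.1 a) y y' ∧ w = fun ω => vA a y ω - vA a y' ω) ∨
       (∃ b x x', Covers (L.2 b) x x' ∧ w = fun ω => vB b x ω - vB b x' ω)}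

/-- Non-degeneracy: for every strict preference profile, every subset of `V_≺`
of cardinality `|Ω|` is linearly independent. -/
def NonDegenerate {Ω A B : Type*} [Fintype Ω]
    (vA : A → B → Ω → ℝ) (vB : B → A → Ω → ℝ) : Prop :=
  ∀ L : Pref A B, StrictProfile L →
    ∀ s : Finset (Ω → ℝ), ↑s ⊆ Vset vA vB L → s.card = Fintype.card Ω →
      LinearIndependent ℝ (fun w : s => (w : Ω → ℝ))

/-- The uniform probability measure on the interval `(-ε, ε)`. -/
noncomputable def unif (ε : ℝ) : Measure ℝ :=
  (ENNReal.ofReal (2 * ε))⁻¹ • volume.restrict (Set.Ioo (-ε) ε)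


theorem poly_null_fin : ∀ (n : ℕ) (p : MvPolynomial (Fin n) ℝ), p ≠ 0 →
    (volume : Measure (Fin n → ℝ)) {x | MvPolynomial.eval x p = 0} = 0 := by
  intro n
  induction n with
  | zero =>
    intro p hp
    obtain ⟨c, rfl⟩ := MvPolynomial.C_surjective (Fin 0) p
    have hc : c ≠ 0 := fun h => hp (by simp [h])
    convert measure_empty (μ := (volume : Measure (Fin 0 → ℝ)))
    ext x
    simp [hc]
  | succ n ih =>
    intro p hp
    set q := MvPolynomial.finSuccEquiv ℝ n p with hq_def
    have hq : q ≠ 0 := by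
      intro h
      exact hp ((map_eq_zero_iff _ (AlgEquiv.injective _)).mp h)
    obtain ⟨k, hk⟩ : ∃ k, q.coeff k ≠ 0 := by
      by_contra h
      push_neg at h
      exact hq (Polynomial.ext fun k => by simp [h k])
    have hN : (volume : Measure (Fin n → ℝ)) {x | MvPolynomial.eval x (q.coeff k) = 0} = 0 :=
      ih _ hk
    have hmp := measurePreserving_piFinSuccAbove (fun _ : Fin (n+1) => (volume : Measure ℝ)) 0
    set T : Set (ℝ × (Fin n → ℝ)) :=
      {y | Polynomial.eval y.1 (Polynomial.map (MvPolynomial.eval y.2) q) = 0} with hT_def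
    have hcont : Continuous fun y : ℝ × (Fin n → ℝ) =>
        Polynomial.eval y.1 (Polynomial.map (MvPolynomial.eval y.2) q) := by
      have : ∀ y : ℝ × (Fin n → ℝ), Polynomial.eval y.1 (Polynomial.map (MvPolynomial.eval y.2) q)
          = MvPolynomial.eval (Fin.cons y.1 y.2) p := by
        intro y; rw [MvPolynomial.eval_eq_eval_mv_eval']
      rw [funext this]
      exact (MvPolynomial.continuous_eval p).comp
        (continuous_pi fun j => Fin.cases continuous_fst
          (fun i => (continuous_apply i).comp continuous_snd) j)
    have hTm : MeasurableSet T := (isClosed_singleton.preimage hcont).measurableSet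
    have hST : {x : Fin (n+1) → ℝ | MvPolynomial.eval x p = 0} =
        (MeasurableEquiv.piFinSuccAbove (fun _ => ℝ) 0) ⁻¹' T := by
      ext x
      have hx : MvPolynomial.eval x p =
          MvPolynomial.eval (Fin.cons (x 0) (Fin.tail x)) p := by rw [Fin.cons_self_tail]
      simp only [Set.mem_setOf_eq, Set.mem_preimage, hT_def, MeasurableEquiv.piFinSuccAbove,
        MeasurableEquiv.coe_mk, Equiv.coe_fn_mk]
      rw [hx, MvPolynomial.eval_eq_eval_mv_eval']
      rfl
    rw [show (volume : Measure (Fin (n+1) → ℝ)) = Measure.pi (fun _ => volume) from volume_pi,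
      hST, hmp.measure_preimage hTm.nullMeasurableSet]
    -- now swap and use Fubini
    have hswap : (volume : Measure ℝ).prod (Measure.pi fun _ : Fin n => (volume : Measure ℝ)) T
        = ((Measure.pi fun _ : Fin n => (volume : Measure ℝ)).prod volume) (Prod.swap ⁻¹' T) := by
      rw [← Measure.prod_swap]
      rw [Measure.map_apply measurable_swap hTm]
    rw [hswap]
    rw [Measure.measure_prod_null (measurable_swap hTm)]
    have hae : ∀ᵐ x' ∂(Measure.pi fun _ : Fin n => (volume : Measure ℝ)),
        MvPolynomial.eval x' (q.coeff k) ≠ 0 := by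
      rw [ae_iff]
      push_neg
      simpa [volume_pi] using hN
    filter_upwards [hae] with x' hx'
    have hr : Polynomial.map (MvPolynomial.eval x') q ≠ 0 := by
      intro h
      apply hx'
      have := congrArg (fun r => Polynomial.coeff r k) h
      simpa [Polynomial.coeff_map] using this
    have hfin : {a : ℝ | (a, x') ∈ T}.Finite := by
      have := Polynomial.finite_setOf_isRoot hr
      convert this using 1
      ext a; exact Iff.rfl
    calc (volume : Measure ℝ) (Prod.mk x' ⁻¹' (Prod.swap ⁻¹' T))
        = volume {a : ℝ | (a, x') ∈ T} := rfl
      _ = 0 := hfin.measure_zero _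

theorem poly_null {ι : Type} [Fintype ι] (p : MvPolynomial ι ℝ) (hp : p ≠ 0) :
    (volume : Measure (ι → ℝ)) {x | MvPolynomial.eval x p = 0} = 0 := by
  set f : Fin (Fintype.card ι) ≃ ι := (Fintype.equivFin ι).symm with hf
  have hmp := volume_measurePreserving_piCongrLeft (fun _ : ι => ℝ) f
  have hSm : MeasurableSet {x : ι → ℝ | MvPolynomial.eval x p = 0} :=
    (isClosed_singleton.preimage (MvPolynomial.continuous_eval p)).measurableSet
  rw [← hmp.measure_preimage hSm.nullMeasurableSet]
  have hpre : (MeasurableEquiv.piCongrLeft (fun _ : ι => ℝ) f) ⁻¹'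
      {x : ι → ℝ | MvPolynomial.eval x p = 0} =
      {z : Fin (Fintype.card ι) → ℝ |
        MvPolynomial.eval z (MvPolynomial.rename f.symm p) = 0} := by
    ext z
    simp only [Set.mem_preimage, Set.mem_setOf_eq, MvPolynomial.eval_rename]
    have : ⇑(MeasurableEquiv.piCongrLeft (fun _ : ι => ℝ) f) z = z ∘ f.symm := by
      funext j
      have := MeasurableEquiv.piCongrLeft_apply_apply (β := fun _ : ι => ℝ) f z (f.symm j)
      simpa using this
    rw [this]
  rw [hpre]
  exact poly_null_fin _ _ (fun h => hp (by
    have := congrArg (MvPolynomial.rename f) h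
    rwa [MvPolynomial.rename_rename, map_zero, Equiv.self_comp_symm,
      MvPolynomial.rename_id] at this))


theorem unif_prob {ε : ℝ} (hε : 0 < ε) : IsProbabilityMeasure (unif ε) := by
  constructor
  have h2 : (0:ℝ) < 2 * ε := by linarith
  simp only [unif, Measure.smul_apply, Measure.restrict_apply MeasurableSet.univ,
    Set.univ_inter, Real.volume_Ioo, smul_eq_mul]
  rw [show ε - (-ε) = 2 * ε by ring]
  rw [ENNReal.inv_mul_cancel (by simpa using h2) ENNReal.ofReal_ne_top]

theorem pi_unif_eq {ι : Type} [Fintype ι] {ε : ℝ} (hε : 0 < ε) :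
    Measure.pi (fun _ : ι => unif ε) =
      ((ENNReal.ofReal (2 * ε))⁻¹ ^ Fintype.card ι) •
        ((Measure.pi fun _ : ι => (volume : Measure ℝ)).restrict
          (Set.univ.pi fun _ => Set.Ioo (-ε) ε)) := by
  haveI : IsProbabilityMeasure (unif ε) := unif_prob hε
  refine (Measure.pi_eq (μ := fun _ : ι => unif ε)
    (μ' := ((ENNReal.ofReal (2 * ε))⁻¹ ^ Fintype.card ι) •
        ((Measure.pi fun _ : ι => (volume : Measure ℝ)).restrict
          (Set.univ.pi fun _ => Set.Ioo (-ε) ε))) fun s hs => ?_)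
  rw [Measure.smul_apply, Measure.restrict_apply (MeasurableSet.univ_pi hs),
    ← Set.pi_inter_distrib, Measure.pi_pi, smul_eq_mul]
  have : ∀ i : ι, ((fun _ => unif ε) i) (s i)
      = (ENNReal.ofReal (2*ε))⁻¹ * volume (s i ∩ Set.Ioo (-ε) ε) :=
    fun i => by rw [unif, Measure.smul_apply, Measure.restrict_apply (hs i), smul_eq_mul]
  rw [Finset.prod_congr rfl fun i _ => this i, Finset.prod_mul_distrib, Finset.prod_const,
    Finset.card_univ]

theorem pi_unif_ac {ι : Type} [Fintype ι] {ε : ℝ} (hε : 0 < ε) :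
    Measure.pi (fun _ : ι => unif ε) ≪ (volume : Measure (ι → ℝ)) := by
  refine Measure.AbsolutelyContinuous.mk fun S hSm hS => ?_
  rw [pi_unif_eq hε, Measure.smul_apply, smul_eq_mul,
    Measure.restrict_apply hSm]
  have : (Measure.pi fun _ : ι => (volume : Measure ℝ))
      (S ∩ Set.univ.pi fun _ => Set.Ioo (-ε) ε) = 0 := by
    refine le_antisymm ?_ zero_le
    calc _ ≤ (Measure.pi fun _ : ι => (volume : Measure ℝ)) S :=
          measure_mono Set.inter_subset_left
      _ = 0 := by rw [← volume_pi]; exact hS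
  rw [this, mul_zero]

section Ord
variable {X : Type*} {r : X → X → Bool}

/-- weak order: `x ≼ y`. -/
def rle (r : X → X → Bool) (x y : X) : Prop := x = y ∨ r x y = true

lemma asymm (h : StrictOrd r) {x y : X} (h1 : r x y = true) (h2 : r y x = true) : False := by
  have := h.2.1 x y x h1 h2
  rw [h.1 x] at this
  exact Bool.false_ne_true this

lemma rle_of_rle_of_lt (h : StrictOrd r) {u y y' : X} (hyy' : r y y' = true)
    (hu : rle r u y) : rle r u y' := by
  rcases hu with rfl | hu
  · exact Or.inr hyy'
  · exact Or.inr (h.2.1 _ _ _ hu hyy')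

lemma pred_unique (h : StrictOrd r) {y1 y2 y' : X}
    (h1 : Covers r y1 y') (h2 : Covers r y2 y') : y1 = y2 := by
  by_contra hne
  rcases h.2.2 _ _ hne with hlt | hlt
  · exact h1.2 y2 ⟨hlt, h2.1⟩
  · exact h2.2 y1 ⟨hlt, h1.1⟩

lemma cov_char (h : StrictOrd r) {y y' : X} (hc : Covers r y y') (u : X) :
    (rle r u y' ∧ ¬ rle r u y) ↔ u = y' := by
  constructor
  · rintro ⟨hle, hnle⟩
    rcases hle with rfl | hlt
    · rfl
    · exfalso
      rcases Classical.em (u = y) with rfl | hne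
      · exact hnle (Or.inl rfl)
      rcases h.2.2 _ _ hne with h1 | h1
      · exact hnle (Or.inr h1)
      · exact hc.2 u ⟨h1, hlt⟩
  · rintro rfl
    refine ⟨Or.inl rfl, ?_⟩
    rintro (rfl | hlt)
    · have := hc.1; rw [h.1] at this; exact Bool.false_ne_true this
    · exact asymm h hc.1 hlt

end Ord

section Main

variable {Ω A B : Type} [Fintype Ω] [Fintype A] [Fintype B]

/-- Triples `(agent, y, y')`. -/
abbrev Triple (A B : Type) := (A × B × B) ⊕ (B × A × A)

def src : Triple A B → (A × B ⊕ B × A)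
  | .inl (a, y, _) => .inl (a, y)
  | .inr (b, x, _) => .inr (b, x)

def tgt : Triple A B → (A × B ⊕ B × A)
  | .inl (a, _, y') => .inl (a, y')
  | .inr (b, _, x') => .inr (b, x')

def IsCov (L : Pref A B) : Triple A B → Prop
  | .inl (a, y, y') => Covers (L.1 a) y y'
  | .inr (b, x, x') => Covers (L.2 b) x x'

open Classical in
lemma exists_estar (L : Pref A B) (hL : StrictProfile L) (τ : Ω → Triple A B)
    (hinj : Function.Injective τ) (hcov : ∀ ω, IsCov L (τ ω)) (G : Ω → Ω → ℝ) :
    ∃ e : (A × B ⊕ B × A) × Ω → ℝ,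
      ∀ ω ω', e (src (τ ω), ω') - e (tgt (τ ω), ω') = G ω ω' := by
  refine ⟨fun i => match i with
    | (Sum.inl (a, b), ω') =>
        -∑ ω₁ ∈ univ.filter
            (fun ω₁ => ∃ y y', τ ω₁ = Sum.inl (a, y, y') ∧ rle (L.1 a) y' b), G ω₁ ω'
    | (Sum.inr (b, c), ω') =>
        -∑ ω₁ ∈ univ.filter
            (fun ω₁ => ∃ x x', τ ω₁ = Sum.inr (b, x, x') ∧ rle (L.2 b) x' c), G ω₁ ω', ?_⟩
  intro ω ω'
  rcases hτ : τ ω with t | t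
  · obtain ⟨a, y, y'⟩ := t
    have hc : Covers (L.1 a) y y' := by have := hcov ω; rw [hτ] at this; exact this
    show (-∑ ω₁ ∈ univ.filter
            (fun ω₁ => ∃ y₁ y₁', τ ω₁ = Sum.inl (a, y₁, y₁') ∧ rle (L.1 a) y₁' y), G ω₁ ω')
        - (-∑ ω₁ ∈ univ.filter
            (fun ω₁ => ∃ y₁ y₁', τ ω₁ = Sum.inl (a, y₁, y₁') ∧ rle (L.1 a) y₁' y'), G ω₁ ω')
        = G ω ω'
    have hsub : univ.filter
          (fun ω₁ => ∃ y₁ y₁', τ ω₁ = Sum.inl (a, y₁, y₁') ∧ rle (L.1 a) y₁' y) ⊆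
        univ.filter
          (fun ω₁ => ∃ y₁ y₁', τ ω₁ = Sum.inl (a, y₁, y₁') ∧ rle (L.1 a) y₁' y') := by
      intro ω₁ h1
      simp only [mem_filter, mem_univ, true_and] at h1 ⊢
      obtain ⟨y₁, y₁', ht, hle⟩ := h1
      exact ⟨y₁, y₁', ht, rle_of_rle_of_lt (hL.1 a) hc.1 hle⟩
    have hdiff : univ.filter
          (fun ω₁ => ∃ y₁ y₁', τ ω₁ = Sum.inl (a, y₁, y₁') ∧ rle (L.1 a) y₁' y') \
        univ.filter
          (fun ω₁ => ∃ y₁ y₁', τ ω₁ = Sum.inl (a, y₁, y₁') ∧ rle (L.1 a) y₁' y) = {ω} := by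
      ext ω₁
      simp only [mem_sdiff, mem_filter, mem_univ, true_and, mem_singleton]
      constructor
      · rintro ⟨⟨y₁, y₁', ht, hle⟩, hnot⟩
        have hnle : ¬ rle (L.1 a) y₁' y := fun h => hnot ⟨y₁, y₁', ht, h⟩
        have : y₁' = y' := (cov_char (hL.1 a) hc y₁').mp ⟨hle, hnle⟩
        subst this
        have hc₁ : Covers (L.1 a) y₁ y₁' := by have := hcov ω₁; rw [ht] at this; exact this
        have : y₁ = y := pred_unique (hL.1 a) hc₁ hc
        subst this
        exact hinj (ht.trans hτ.symm)
      · rintro rfl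
        refine ⟨⟨y, y', hτ, Or.inl rfl⟩, ?_⟩
        rintro ⟨y₁, y₁', ht, hle⟩
        rw [hτ] at ht
        obtain ⟨h1, h2⟩ : y = y₁ ∧ y' = y₁' := by
          injection ht with h; injection h with ha hb; injection hb with h3 h4
          exact ⟨h3, h4⟩
        subst h1; subst h2
        exact ((cov_char (hL.1 a) hc y').mpr rfl).2 hle
    rw [sub_neg_eq_add, neg_add_eq_sub, ← Finset.sum_sdiff_eq_sub hsub, hdiff,
      Finset.sum_singleton]
  · obtain ⟨b, x, x'⟩ := t
    have hc : Covers (L.2 b) x x' := by have := hcov ω; rw [hτ] at this; exact this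
    show (-∑ ω₁ ∈ univ.filter
            (fun ω₁ => ∃ x₁ x₁', τ ω₁ = Sum.inr (b, x₁, x₁') ∧ rle (L.2 b) x₁' x), G ω₁ ω')
        - (-∑ ω₁ ∈ univ.filter
            (fun ω₁ => ∃ x₁ x₁', τ ω₁ = Sum.inr (b, x₁, x₁') ∧ rle (L.2 b) x₁' x'), G ω₁ ω')
        = G ω ω'
    have hsub : univ.filter
          (fun ω₁ => ∃ x₁ x₁', τ ω₁ = Sum.inr (b, x₁, x₁') ∧ rle (L.2 b) x₁' x) ⊆
        univ.filter
          (fun ω₁ => ∃ x₁ x₁', τ ω₁ = Sum.inr (b, x₁, x₁') ∧ rle (L.2 b) x₁' x') := by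
      intro ω₁ h1
      simp only [mem_filter, mem_univ, true_and] at h1 ⊢
      obtain ⟨x₁, x₁', ht, hle⟩ := h1
      exact ⟨x₁, x₁', ht, rle_of_rle_of_lt (hL.2 b) hc.1 hle⟩
    have hdiff : univ.filter
          (fun ω₁ => ∃ x₁ x₁', τ ω₁ = Sum.inr (b, x₁, x₁') ∧ rle (L.2 b) x₁' x') \
        univ.filter
          (fun ω₁ => ∃ x₁ x₁', τ ω₁ = Sum.inr (b, x₁, x₁') ∧ rle (L.2 b) x₁' x) = {ω} := by
      ext ω₁
      simp only [mem_sdiff, mem_filter, mem_univ, true_and, mem_singleton]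
      constructor
      · rintro ⟨⟨x₁, x₁', ht, hle⟩, hnot⟩
        have hnle : ¬ rle (L.2 b) x₁' x := fun h => hnot ⟨x₁, x₁', ht, h⟩
        have : x₁' = x' := (cov_char (hL.2 b) hc x₁').mp ⟨hle, hnle⟩
        subst this
        have hc₁ : Covers (L.2 b) x₁ x₁' := by have := hcov ω₁; rw [ht] at this; exact this
        have : x₁ = x := pred_unique (hL.2 b) hc₁ hc
        subst this
        exact hinj (ht.trans hτ.symm)
      · rintro rfl
        refine ⟨⟨x, x', hτ, Or.inl rfl⟩, ?_⟩
        rintro ⟨x₁, x₁', ht, hle⟩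
        rw [hτ] at ht
        obtain ⟨h1, h2⟩ : x = x₁ ∧ x' = x₁' := by
          injection ht with h; injection h with ha hb; injection hb with h3 h4
          exact ⟨h3, h4⟩
        subst h1; subst h2
        exact ((cov_char (hL.2 b) hc x').mpr rfl).2 hle
    rw [sub_neg_eq_add, neg_add_eq_sub, ← Finset.sum_sdiff_eq_sub hsub, hdiff,
      Finset.sum_singleton]

variable (vA : A → B → Ω → ℝ) (vB : B → A → Ω → ℝ)

def cst (t : Triple A B) (ω' : Ω) : ℝ :=
  match t with
  | .inl (a, y, y') => vA a y ω' - vA a y' ω'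
  | .inr (b, x, x') => vB b x ω' - vB b x' ω'

noncomputable def rowPoly (t : Triple A B) (ω' : Ω) :
    MvPolynomial ((A × B ⊕ B × A) × Ω) ℝ :=
  MvPolynomial.C (cst vA vB t ω') + MvPolynomial.X (src t, ω') - MvPolynomial.X (tgt t, ω')

open Classical in
noncomputable def detPoly (τ : Ω → Triple A B) : MvPolynomial ((A × B ⊕ B × A) × Ω) ℝ :=
  (Matrix.of fun ω ω' => rowPoly vA vB (τ ω) ω').det

open Classical in
lemma eval_detPoly (τ : Ω → Triple A B) (e : (A × B ⊕ B × A) × Ω → ℝ) :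
    MvPolynomial.eval e (detPoly vA vB τ) =
      (Matrix.of fun ω ω' =>
        cst vA vB (τ ω) ω' + e (src (τ ω), ω') - e (tgt (τ ω), ω')).det := by
  rw [detPoly, RingHom.map_det]
  congr 1
  ext ω ω'
  simp [Matrix.map_apply, rowPoly]

open Classical in
lemma detPoly_ne_zero (τ : Ω → Triple A B) (hinj : Function.Injective τ)
    (L : Pref A B) (hL : StrictProfile L) (hcov : ∀ ω, IsCov L (τ ω)) :
    detPoly vA vB τ ≠ 0 := by
  obtain ⟨e, he⟩ := exists_estar L hL τ hinj hcov
    (fun ω ω' => (if ω = ω' then (1:ℝ) else 0) - cst vA vB (τ ω) ω')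
  intro h0
  have h1 : MvPolynomial.eval e (detPoly vA vB τ) = 0 := by rw [h0]; simp
  rw [eval_detPoly] at h1
  have hM : (Matrix.of fun ω ω' =>
      cst vA vB (τ ω) ω' + e (src (τ ω), ω') - e (tgt (τ ω), ω')) = (1 : Matrix Ω Ω ℝ) := by
    ext ω ω'
    rw [Matrix.one_apply]
    have h2 := he ω ω'
    simp only [Matrix.of_apply]
    linarith
  rw [hM, Matrix.det_one] at h1
  exact one_ne_zero h1

end Main

/-- **Generic non-degeneracy under random perturbation** (Proposition 6):
adding independent uniform `(-ε, ε)` noise to every value `v_x(y | ω)` yields a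
non-degenerate instance with probability `1`. -/
theorem nondegenerate_of_random_perturbation
    {Ω A B : Type} [Fintype Ω] [Nonempty Ω] [Fintype A] [Fintype B]
    (vA : A → B → Ω → ℝ) (vB : B → A → Ω → ℝ) (ε : ℝ) (hε : 0 < ε) :
    Measure.pi (fun _ : (A × B ⊕ B × A) × Ω => unif ε)
      {e : (A × B ⊕ B × A) × Ω → ℝ |
        NonDegenerate (fun a b ω => vA a b ω + e (Sum.inl (a, b), ω))
                      (fun b a ω => vB b a ω + e (Sum.inr (b, a), ω))} = 1 := by
  classical
  haveI : IsProbabilityMeasure (unif ε) := unif_prob hε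
  set μ := Measure.pi (fun _ : (A × B ⊕ B × A) × Ω => unif ε) with hμ
  haveI hPM : IsProbabilityMeasure μ := by rw [hμ]; infer_instance
  set S := {e : (A × B ⊕ B × A) × Ω → ℝ |
        NonDegenerate (fun a b ω => vA a b ω + e (Sum.inl (a, b), ω))
                      (fun b a ω => vB b a ω + e (Sum.inr (b, a), ω))} with hS
  have hcompl : μ Sᶜ = 0 := by
    have hsubset : Sᶜ ⊆ ⋃ (τ : {τ : Ω → Triple A B // Function.Injective τ ∧
          ∃ L : Pref A B, StrictProfile L ∧ ∀ ω, IsCov L (τ ω)}),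
        {e : (A × B ⊕ B × A) × Ω → ℝ | MvPolynomial.eval e (detPoly vA vB τ.1) = 0} := by
      intro e he
      have hnd : ¬ NonDegenerate (fun a b ω => vA a b ω + e (Sum.inl (a, b), ω))
          (fun b a ω => vB b a ω + e (Sum.inr (b, a), ω)) := he
      rw [NonDegenerate] at hnd
      push_neg at hnd
      obtain ⟨L, hL, s, hsub, hcard, hnli⟩ := hnd
      have hchoice : ∀ w : ↥s, ∃ t : Triple A B, IsCov L t ∧
          (w : Ω → ℝ) = fun ω' => cst vA vB t ω' + e (src t, ω') - e (tgt t, ω') := by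
        intro w
        rcases hsub w.2 with ⟨a, y, y', hc, hwe⟩ | ⟨b, x, x', hc, hwe⟩
        · refine ⟨Sum.inl (a, y, y'), hc, ?_⟩
          rw [hwe]; funext ω'; show (vA a y ω' + _) - (vA a y' ω' + _) = _
          simp only [cst, src, tgt]; ring
        · refine ⟨Sum.inr (b, x, x'), hc, ?_⟩
          rw [hwe]; funext ω'; show (vB b x ω' + _) - (vB b x' ω' + _) = _
          simp only [cst, src, tgt]; ring
      choose t ht1 ht2 using hchoice
      have htinj : Function.Injective t := by
        intro w w' h
        exact Subtype.ext (by rw [ht2 w, ht2 w', h])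
      have hcards : Fintype.card Ω = Fintype.card (↥s) := by
        rw [Fintype.card_coe, hcard]
      set σ : Ω ≃ ↥s := Fintype.equivOfCardEq hcards with hσ
      set τ : Ω → Triple A B := fun ω => t (σ ω) with hτ
      refine Set.mem_iUnion.mpr ⟨⟨τ, htinj.comp σ.injective, L, hL, fun ω => ht1 (σ ω)⟩, ?_⟩
      show MvPolynomial.eval e (detPoly vA vB τ) = 0
      rw [eval_detPoly]
      by_contra hdet
      have hMu : IsUnit (Matrix.of fun ω ω' =>
          cst vA vB (τ ω) ω' + e (src (τ ω), ω') - e (tgt (τ ω), ω')) :=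
        (Matrix.isUnit_iff_isUnit_det _).mpr (isUnit_iff_ne_zero.mpr hdet)
      have hli := Matrix.linearIndependent_rows_iff_isUnit.mpr hMu
      apply hnli
      have hrow : ∀ ω, (Matrix.of fun ω ω' =>
          cst vA vB (τ ω) ω' + e (src (τ ω), ω') - e (tgt (τ ω), ω')) ω
          = ((σ ω : Ω → ℝ)) := by
        intro ω
        funext ω'
        rw [Matrix.of_apply]
        exact (congrFun (ht2 (σ ω)) ω').symm
      have hfam : (fun w : ↥s => (w : Ω → ℝ)) = (fun ω => (Matrix.of fun ω ω' =>
          cst vA vB (τ ω) ω' + e (src (τ ω), ω') - e (tgt (τ ω), ω')) ω) ∘ σ.symm := by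
        funext w
        show _ = (Matrix.of fun ω ω' => _) (σ.symm w)
        rw [hrow (σ.symm w), σ.apply_symm_apply]
      rw [hfam]
      exact hli.comp σ.symm σ.symm.injective
    refine measure_mono_null hsubset (measure_iUnion_null fun τ => ?_)
    exact (pi_unif_ac hε) (poly_null _
      (detPoly_ne_zero vA vB τ.1 τ.2.1 τ.2.2.choose τ.2.2.choose_spec.1 τ.2.2.choose_spec.2))
  refine le_antisymm prob_le_one ?_
  calc (1 : ENNReal) = μ (S ∪ Sᶜ) := by rw [Set.union_compl_self, measure_univ]
    _ ≤ μ S + μ Sᶜ := measure_union_le _ _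
    _ = μ S := by rw [hcompl, add_zero]

end MP
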